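/- Let m be a positive integer and x_1,...,x_m odd positive integers. Then x_1,...,x_m are the denominators of the odd greedy expansion of ∑_{j=1}^m 1/x_j if and only if for all positive integers i, k with i ≤ k ≤ m one has 2·σ_{k−i}(x_i,...,x_k) > x_i²·σ_{k−i−1}(x_{i+1},...,x_k). -/

import Mathlib

/-- `a` is the denominator chosen by the odd greedy algorithm for remainder `q`. -/
def IsOddGreedyStep (q : ℚ) (a : ℕ) : Prop :=
  Odd a ∧ ((a = 1 ∧ 1 ≤ q) ∨ (3 ≤ a ∧ (1 : ℚ) / a ≤ q ∧ q < 1 / ((a : ℚ) - 2)))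

/-- `x 0, …, x (m-1)` are the denominators of the odd greedy expansion of `q`. -/
def IsOddGreedyExpansion (m : ℕ) (x : ℕ → ℕ) (q : ℚ) : Prop :=
  q = ∑ i ∈ Finset.range m, (1 : ℚ) / (x i) ∧
    ∀ i < m, IsOddGreedyStep (q - ∑ j ∈ Finset.range i, (1 : ℚ) / (x j)) (x i)

/-- The elementary symmetric polynomial of (integer) degree `d` in the variables
`f j` for `j ∈ s`, with value `0` for negative `d` (and `1` for `d = 0`). -/
def esymZ (s : Finset ℕ) (f : ℕ → ℤ) (d : ℤ) : ℤ :=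
  if d < 0 then 0 else ∑ u ∈ s.powersetCard d.toNat, ∏ j ∈ u, f j

open Finset

lemma esymZ_eq_sum_erase (s : Finset ℕ) (f : ℕ → ℤ) :
    esymZ s f ((s.card : ℤ) - 1) = ∑ j ∈ s, ∏ l ∈ s.erase j, f l := by
  rcases s.eq_empty_or_nonempty with rfl | hs
  · simp [esymZ]
  · have hc : 1 ≤ s.card := Finset.card_pos.mpr hs
    have hnn : ¬ ((s.card : ℤ) - 1 < 0) := by omega
    have ht : ((s.card : ℤ) - 1).toNat = s.card - 1 := by omega
    rw [esymZ, if_neg hnn, ht]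
    refine (Finset.sum_bij (fun j _ => s.erase j) ?_ ?_ ?_ ?_).symm
    · intro a ha
      rw [Finset.mem_powersetCard]
      exact ⟨Finset.erase_subset _ _, Finset.card_erase_of_mem ha⟩
    · intro a ha b hb hab
      have hab' : s.erase a = s.erase b := hab
      by_contra hne
      have : a ∈ s.erase b := Finset.mem_erase.mpr ⟨hne, ha⟩
      rw [← hab'] at this
      exact (Finset.notMem_erase a s) this
    · intro u hu
      rw [Finset.mem_powersetCard] at hu
      have hcard : (s \ u).card = 1 := by
        rw [Finset.card_sdiff_of_subset hu.1, hu.2]; omega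
      obtain ⟨a, hau⟩ := Finset.card_eq_one.mp hcard
      have has : a ∈ s := by
        have : a ∈ s \ u := hau ▸ Finset.mem_singleton_self a
        exact (Finset.mem_sdiff.mp this).1
      refine ⟨a, has, ?_⟩
      show s.erase a = u
      rw [Finset.erase_eq, ← hau]
      exact Finset.sdiff_sdiff_eq_self hu.1
    · intro a ha; rfl

lemma esymZ_cast (s : Finset ℕ) (f : ℕ → ℤ) (hf : ∀ j ∈ s, 0 < f j) :
    ((esymZ s f ((s.card : ℤ) - 1) : ℤ) : ℚ) =
      (∏ j ∈ s, (f j : ℚ)) * ∑ j ∈ s, 1 / (f j : ℚ) := by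
  rw [esymZ_eq_sum_erase]
  push_cast
  rw [Finset.mul_sum]
  refine Finset.sum_congr rfl fun j hj => ?_
  have hj0 : (f j : ℚ) ≠ 0 := by
    have := hf j hj
    exact_mod_cast this.ne'
  rw [mul_one_div, ← Finset.prod_erase_mul s _ hj, mul_div_cancel_right₀ _ hj0]

lemma pair_iff (x : ℕ → ℕ) (i k : ℕ) (hik : i ≤ k) (hpos : ∀ j ∈ Finset.Icc i k, 0 < x j) :
    (2 * esymZ (Finset.Icc i k) (fun j => (x j : ℤ)) ((k : ℤ) - i) >
      (x i : ℤ) ^ 2 * esymZ (Finset.Icc (i + 1) k) (fun j => (x j : ℤ)) ((k : ℤ) - i - 1)) ↔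
    ((x i : ℚ) - 2) * ∑ j ∈ Finset.Icc i k, 1 / (x j : ℚ) < 1 := by
  have hc1 : (((Finset.Icc i k).card : ℤ)) - 1 = (k : ℤ) - i := by
    rw [Nat.card_Icc]; omega
  have hc2 : (((Finset.Icc (i + 1) k).card : ℤ)) - 1 = (k : ℤ) - i - 1 := by
    rw [Nat.card_Icc]; omega
  have hposZ : ∀ j ∈ Finset.Icc i k, (0 : ℤ) < (x j : ℤ) := fun j hj => by
    exact_mod_cast hpos j hj
  have hposZ' : ∀ j ∈ Finset.Icc (i + 1) k, (0 : ℤ) < (x j : ℤ) := fun j hj => by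
    refine hposZ j ?_
    simp only [Finset.mem_Icc] at hj ⊢; omega
  have e1 := esymZ_cast (Finset.Icc i k) (fun j => (x j : ℤ)) hposZ
  have e2 := esymZ_cast (Finset.Icc (i + 1) k) (fun j => (x j : ℤ)) hposZ'
  rw [hc1] at e1; rw [hc2] at e2
  rw [gt_iff_lt, ← @Int.cast_lt ℚ]
  push_cast [e1, e2]
  -- abbreviations
  have hins : Finset.Icc i k = insert i (Finset.Icc (i + 1) k) := by
    ext j; simp only [Finset.mem_Icc, Finset.mem_insert]; omega
  have hni : i ∉ Finset.Icc (i + 1) k := by simp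
  set P' : ℚ := ∏ j ∈ Finset.Icc (i + 1) k, (x j : ℚ) with hP'def
  set S' : ℚ := ∑ j ∈ Finset.Icc (i + 1) k, 1 / (x j : ℚ) with hS'def
  set a : ℚ := (x i : ℚ) with hadef
  have hprod : (∏ j ∈ Finset.Icc i k, (x j : ℚ)) = a * P' := by
    rw [hins, Finset.prod_insert hni]
  have hsum : (∑ j ∈ Finset.Icc i k, 1 / (x j : ℚ)) = 1 / a + S' := by
    rw [hins, Finset.sum_insert hni]
  rw [hprod, hsum]
  have ha : 0 < a := by
    have h := hpos i (by simp [Finset.mem_Icc]; omega)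
    rw [hadef]
    exact_mod_cast h
  have hP' : 0 < P' := by
    refine Finset.prod_pos fun j hj => ?_
    have := hposZ' j hj
    exact_mod_cast this
  have hS' : 0 ≤ S' := Finset.sum_nonneg fun j _ => by positivity
  have hu : a * (1 / a) = 1 := by field_simp
  have lhs_iff : (a ^ 2 * ((P' * S')) < 2 * ((a * P') * (1 / a + S'))) ↔
      a * (a * S') < 2 * (1 + a * S') := by
    rw [show a ^ 2 * (P' * S') = P' * (a * (a * S')) by ring,
        show 2 * ((a * P') * (1 / a + S')) = P' * (2 * (a * (1 / a) + a * S')) by ring, hu]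
    exact mul_lt_mul_iff_right₀ hP'
  have rhs_iff : ((a - 2) * (1 / a + S') < 1) ↔ (a - 2) * (1 + a * S') < a := by
    rw [← mul_lt_mul_iff_right₀ ha,
        show a * ((a - 2) * (1 / a + S')) = (a - 2) * (a * (1 / a) + a * S') by ring, hu, mul_one]
  have hmain : (a * (a * S') < 2 * (1 + a * S')) ↔ ((a - 2) * (1 + a * S') < a) := by
    constructor <;> intro h <;> nlinarith [mul_nonneg ha.le hS']
  constructor
  · intro h
    rw [rhs_iff, ← hmain, ← lhs_iff]
    convert h using 2 <;> ring
  · intro h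
    rw [rhs_iff, ← hmain, ← lhs_iff] at h
    convert h using 2 <;> ring

lemma step_iff (q : ℚ) (a : ℕ) (ho : Odd a) (ha : 0 < a) (hq : 1 / (a : ℚ) ≤ q) :
    IsOddGreedyStep q a ↔ ((a : ℚ) - 2) * q < 1 := by
  have h1 : a = 1 ∨ 3 ≤ a := by rcases ho with ⟨n, rfl⟩; omega
  constructor
  · rintro ⟨-, ⟨rfl, hq1⟩ | ⟨h3, -, hlt⟩⟩
    · push_cast; linarith
    · have h2 : (0 : ℚ) < (a : ℚ) - 2 := by
        have : (3 : ℚ) ≤ (a : ℚ) := by exact_mod_cast h3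
        linarith
      rw [lt_div_iff₀ h2] at hlt
      nlinarith
  · intro h
    refine ⟨ho, ?_⟩
    rcases h1 with rfl | h3
    · exact Or.inl ⟨rfl, by simpa using hq⟩
    · refine Or.inr ⟨h3, hq, ?_⟩
      have h2 : (0 : ℚ) < (a : ℚ) - 2 := by
        have : (3 : ℚ) ≤ (a : ℚ) := by exact_mod_cast h3
        linarith
      rw [lt_div_iff₀ h2]
      nlinarith

/-- indices shifted to be 0-based: odd positive `x 0, …, x (m-1)` are the
denominators of the odd greedy expansion of the sum of their reciprocals iff
`2·σ_{k−i}(x i,…,x k) > (x i)²·σ_{k−i−1}(x (i+1),…,x k)` for all `i ≤ k < m`. -/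
theorem stmt_6 (m : ℕ) (hm : 0 < m) (x : ℕ → ℕ)
    (hx : ∀ i < m, Odd (x i) ∧ 0 < x i) :
    IsOddGreedyExpansion m x (∑ i ∈ Finset.range m, (1 : ℚ) / (x i)) ↔
      ∀ i k : ℕ, i ≤ k → k < m →
        2 * esymZ (Finset.Icc i k) (fun j => (x j : ℤ)) ((k : ℤ) - i) >
          (x i : ℤ) ^ 2 * esymZ (Finset.Icc (i + 1) k) (fun j => (x j : ℤ)) ((k : ℤ) - i - 1) := by
  have hposset : ∀ i k : ℕ, k < m → ∀ j ∈ Finset.Icc i k, 0 < x j := by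
    intro i k hkm j hj
    simp only [Finset.mem_Icc] at hj
    exact (hx j (by omega)).2
  have hrem : ∀ i : ℕ, i < m →
      (∑ j ∈ Finset.range m, (1 : ℚ) / (x j)) - ∑ j ∈ Finset.range i, (1 : ℚ) / (x j)
        = ∑ j ∈ Finset.Icc i (m - 1), (1 : ℚ) / (x j) := by
    intro i hi
    rw [show Finset.Icc i (m - 1) = Finset.Ico i m from by
          ext j; simp only [Finset.mem_Icc, Finset.mem_Ico]; omega,
        Finset.sum_Ico_eq_sub _ (by omega)]
  have hnonneg : ∀ j : ℕ, (0 : ℚ) ≤ 1 / (x j : ℚ) := fun j => by positivity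
  have hqlb : ∀ i : ℕ, i < m → 1 / (x i : ℚ) ≤ ∑ j ∈ Finset.Icc i (m - 1), (1 : ℚ) / (x j) := by
    intro i hi
    exact Finset.single_le_sum (fun j _ => hnonneg j) (by simp [Finset.mem_Icc]; omega)
  constructor
  · rintro ⟨-, hstep⟩ i k hik hkm
    have him : i < m := lt_of_le_of_lt hik hkm
    have hs := hstep i him
    rw [hrem i him] at hs
    have h1 := (step_iff _ _ (hx i him).1 (hx i him).2 (hqlb i him)).mp hs
    rw [pair_iff x i k hik (hposset i k hkm)]
    have hsub : (∑ j ∈ Finset.Icc i k, 1 / (x j : ℚ)) ≤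
        ∑ j ∈ Finset.Icc i (m - 1), (1 : ℚ) / (x j) :=
      Finset.sum_le_sum_of_subset_of_nonneg
        (Finset.Icc_subset_Icc_right (by omega)) (fun j _ _ => hnonneg j)
    have hTpos : 0 < ∑ j ∈ Finset.Icc i k, 1 / (x j : ℚ) := by
      have hxi : (0 : ℚ) < 1 / (x i : ℚ) := by
        have := (hx i him).2
        positivity
      calc (0 : ℚ) < 1 / (x i : ℚ) := hxi
        _ ≤ _ := Finset.single_le_sum (fun j _ => hnonneg j) (by simp [Finset.mem_Icc]; omega)
    rcases le_or_gt 2 ((x i : ℚ)) with h2 | h2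
    · calc ((x i : ℚ) - 2) * ∑ j ∈ Finset.Icc i k, 1 / (x j : ℚ)
          ≤ ((x i : ℚ) - 2) * ∑ j ∈ Finset.Icc i (m - 1), (1 : ℚ) / (x j) :=
            mul_le_mul_of_nonneg_left hsub (by linarith)
        _ < 1 := h1
    · nlinarith
  · intro hσ
    refine ⟨rfl, fun i him => ?_⟩
    rw [hrem i him]
    have hik : i ≤ m - 1 := by omega
    have h := hσ i (m - 1) hik (by omega)
    rw [pair_iff x i (m - 1) hik (hposset i (m - 1) (by omega))] at h
    exact (step_iff _ _ (hx i him).1 (hx i him).2 (hqlb i him)).mpr h
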